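/- Let R be a commutative ring and L, S, c_1, c_2 ∈ R. In R[[t]], the coefficient of t^3 in 12(Lt + (6LS − 5S^2)t^2) · ((1 + St)(1 + 6Lt − 5St))^{-1} · (1 + c_1 t + c_2 t^2) equals 12(−6c_1L^2 + 10c_1LS − 5c_1S^2 + c_2L + 36L^3 − 90L^2S + 75LS^2 − 20S^3). -/

import Mathlib

open PowerSeries

/-- E₈-model generating function: coefficient of `t^3` (elliptic fourfolds). -/
theorem euler_e8_dim3 {R : Type*} [CommRing R] (L S c₁ c₂ : R) :
    (PowerSeries.coeff (R := R) 3)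
      (12 * (C (R := R) L * X + (6 * C (R := R) L * C (R := R) S - 5 * C (R := R) S ^ 2) * X ^ 2) *
        Ring.inverse ((1 + C (R := R) S * X) * (1 + 6 * C (R := R) L * X - 5 * C (R := R) S * X)) *
        (1 + C (R := R) c₁ * X + C (R := R) c₂ * X ^ 2))
      = 12 * (-6 * c₁ * L ^ 2 + 10 * c₁ * L * S - 5 * c₁ * S ^ 2 + c₂ * L
          + 36 * L ^ 3 - 90 * L ^ 2 * S + 75 * L * S ^ 2 - 20 * S ^ 3) := by
  set u : R⟦X⟧ := (1 + C (R := R) S * X) * (1 + 6 * C (R := R) L * X - 5 * C (R := R) S * X) with hu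
  have hunit : IsUnit u := by
    rw [PowerSeries.isUnit_iff_constantCoeff]
    simp [hu]
  have hinv : u * Ring.inverse u = 1 := Ring.mul_inverse_cancel u hunit
  set w : R⟦X⟧ := Ring.inverse u with hw
  set p1 : R := 12 * L with hp1
  set p2 : R := 12 * (L * c₁ - 6 * L ^ 2 + 10 * L * S - 5 * S ^ 2) with hp2
  set p3 : R := 12 * (-6 * c₁ * L ^ 2 + 10 * c₁ * L * S - 5 * c₁ * S ^ 2 + c₂ * L
          + 36 * L ^ 3 - 90 * L ^ 2 * S + 75 * L * S ^ 2 - 20 * S ^ 3) with hp3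
  set q4 : R := 120 * L * S * c₂ - 60 * S ^ 2 * c₂ - 1080 * L ^ 2 * S * c₁
      + 900 * L * S ^ 2 * c₁ + 8640 * L ^ 3 * S - 10800 * L ^ 2 * S ^ 2
      + 6000 * L * S ^ 3 - 1260 * S ^ 4 + 432 * L ^ 3 * c₁ - 240 * S ^ 3 * c₁
      - 72 * L ^ 2 * c₂ - 2592 * L ^ 4 with hq4
  set q5 : R := 432 * L ^ 3 * S * c₁ - 1080 * L ^ 2 * S ^ 2 * c₁ + 960 * L * S ^ 3 * c₁
      - 300 * S ^ 4 * c₁ - 72 * L ^ 2 * S * c₂ + 60 * L * S ^ 2 * c₂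
      - 2592 * L ^ 4 * S + 8640 * L ^ 3 * S ^ 2 - 10800 * L ^ 2 * S ^ 3
      + 5940 * L * S ^ 4 - 1200 * S ^ 5 with hq5
  set P : R⟦X⟧ := C (R := R) p1 * X + C (R := R) p2 * X ^ 2 + C (R := R) p3 * X ^ 3 with hP
  set Q : R⟦X⟧ := C (R := R) q4 + C (R := R) q5 * X with hQ
  have key : 12 * (C (R := R) L * X + (6 * C (R := R) L * C (R := R) S - 5 * C (R := R) S ^ 2) * X ^ 2) *
      (1 + C (R := R) c₁ * X + C (R := R) c₂ * X ^ 2) = P * u + Q * X ^ 4 := by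
    rw [hP, hQ, hu, hp1, hp2, hp3, hq4, hq5]
    simp only [map_mul, map_add, map_sub, map_neg, map_pow, map_ofNat, map_one]
    ring
  have step : 12 * (C (R := R) L * X + (6 * C (R := R) L * C (R := R) S - 5 * C (R := R) S ^ 2) * X ^ 2) * w *
      (1 + C (R := R) c₁ * X + C (R := R) c₂ * X ^ 2)
      = P * (u * w) + Q * w * X ^ 4 := by
    rw [mul_right_comm, key]; ring
  rw [step, hinv, mul_one, map_add, PowerSeries.coeff_mul_X_pow']
  norm_num
  rw [hP]
  simp only [map_add, map_mul, PowerSeries.coeff_mul_X_pow', coeff_C_mul]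
  norm_num [PowerSeries.coeff_X, hp3]
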